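/- Let X be a ℤ₂⁴-equivariant triangulation of the sphere S³ in ℝ⁴ with exactly 8 vertices. Then there exist a permutation of the four coordinates of ℝ⁴ and nonzero real numbers a, b, c, d such that, after applying the coordinate permutation to all vertices, the vertex set V(X) is one of the following (each listed set containing all sign combinations): (I) {(±a, ±b, 0, 0)} ∪ {(0, 0, ±c, ±d)}; (II) {(±a, ±b, 0, 0)} ∪ {(0, 0, ±c, 0)} ∪ {(0, 0, 0, ±d)}; (III) {(±a, 0, 0, 0)} ∪ {(0, ±b, 0, 0)} ∪ {(0, 0, ±c, 0)} ∪ {(0, 0, 0, ±d)}. -/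

import Mathlib

open Set

noncomputable section

/-- The sign-change map `x ↦ (ε₁x₁, …, εₙxₙ)` on `EuclideanSpace ℝ (Fin n)`. -/
def signMap {n : ℕ} (ε : Fin n → ℝ) (x : EuclideanSpace ℝ (Fin n)) :
    EuclideanSpace ℝ (Fin n) :=
  WithLp.toLp 2 (fun i => ε i * x i)

/-- `X` is a `ℤ₂ⁿ`-equivariant triangulation of the unit sphere `S^{n-1} ⊆ ℝⁿ`. -/
structure IsEquivSphereTriangulation (n : ℕ)
    (X : Geometry.SimplicialComplex ℝ (EuclideanSpace ℝ (Fin n))) : Prop where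
  finite : X.faces.Finite
  zero_not_mem : (0 : EuclideanSpace ℝ (Fin n)) ∉ X.space
  radial_homeo : ∃ φ : X.space ≃ₜ (Metric.sphere (0 : EuclideanSpace ℝ (Fin n)) 1),
      ∀ x : X.space, (φ x : EuclideanSpace ℝ (Fin n)) =
        ‖(x : EuclideanSpace ℝ (Fin n))‖⁻¹ • (x : EuclideanSpace ℝ (Fin n))
  equivariant : ∀ ε : Fin n → ℝ, (∀ i, ε i = 1 ∨ ε i = -1) →
      ∀ s ∈ X.faces, ∃ t ∈ X.faces,
        (t : Set (EuclideanSpace ℝ (Fin n))) = signMap ε '' (s : Set (EuclideanSpace ℝ (Fin n)))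

/-- The point `(a, b, c, d)` of `ℝ⁴`. -/
def v4 (a b c d : ℝ) : EuclideanSpace ℝ (Fin 4) := WithLp.toLp 2 ![a, b, c, d]

/-- The vertex configuration `(I)`: `(±a, ±b, 0, 0)` and `(0, 0, ±c, ±d)`. -/
def setI (a b c d : ℝ) : Set (EuclideanSpace ℝ (Fin 4)) :=
  {v4 a b 0 0, v4 a (-b) 0 0, v4 (-a) b 0 0, v4 (-a) (-b) 0 0,
    v4 0 0 c d, v4 0 0 c (-d), v4 0 0 (-c) d, v4 0 0 (-c) (-d)}

/-- The vertex configuration `(II)`: `(±a, ±b, 0, 0)`, `(0, 0, ±c, 0)` and `(0, 0, 0, ±d)`. -/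
def setII (a b c d : ℝ) : Set (EuclideanSpace ℝ (Fin 4)) :=
  {v4 a b 0 0, v4 a (-b) 0 0, v4 (-a) b 0 0, v4 (-a) (-b) 0 0,
    v4 0 0 c 0, v4 0 0 (-c) 0, v4 0 0 0 d, v4 0 0 0 (-d)}

/-- The vertex configuration `(III)`: `(±a, 0, 0, 0)`, `(0, ±b, 0, 0)`, `(0, 0, ±c, 0)` and
`(0, 0, 0, ±d)`. -/
def setIII (a b c d : ℝ) : Set (EuclideanSpace ℝ (Fin 4)) :=
  {v4 a 0 0 0, v4 (-a) 0 0 0, v4 0 b 0 0, v4 0 (-b) 0 0,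
    v4 0 0 c 0, v4 0 0 (-c) 0, v4 0 0 0 d, v4 0 0 0 (-d)}

namespace Stmt6Aux

abbrev E4 := EuclideanSpace ℝ (Fin 4)

instance : DecidableEq E4 := Classical.decEq _

def flipSign (T : Finset (Fin 4)) : Fin 4 → ℝ := fun i => if i ∈ T then -1 else 1

lemma flipSign_pm (T : Finset (Fin 4)) : ∀ i, flipSign T i = 1 ∨ flipSign T i = -1 := by
  intro i; unfold flipSign; split <;> simp

def flip (T : Finset (Fin 4)) (v : E4) : E4 := signMap (flipSign T) v

lemma flip_apply (T : Finset (Fin 4)) (v : E4) (i : Fin 4) :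
    flip T v i = (if i ∈ T then -1 else 1) * v i := rfl

def supp (v : E4) : Finset (Fin 4) := Finset.univ.filter (fun i => v i ≠ 0)

lemma mem_supp {v : E4} {i : Fin 4} : i ∈ supp v ↔ v i ≠ 0 := by simp [supp]

lemma supp_flip (T : Finset (Fin 4)) (v : E4) : supp (flip T v) = supp v := by
  ext i
  simp only [mem_supp, flip_apply]
  split <;> simp

lemma flip_injOn {v : E4} {T T' : Finset (Fin 4)} (hT : T ⊆ supp v) (hT' : T' ⊆ supp v)
    (h : flip T v = flip T' v) : T = T' := by
  ext i
  by_cases hi : v i = 0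
  · constructor <;> intro hmem
    · exact absurd (mem_supp.mp (hT hmem)) (not_not.mpr hi)
    · exact absurd (mem_supp.mp (hT' hmem)) (not_not.mpr hi)
  · have := congrArg (fun w : E4 => w i) h
    simp only [flip_apply] at this
    constructor <;> intro hmem
    · simp only [hmem, if_true] at this
      by_contra hmem'
      simp only [hmem', if_false, one_mul] at this
      have : v i = 0 := by linarith
      exact hi this
    · simp only [hmem, if_true] at this
      by_contra hmem'
      simp only [hmem', if_false, one_mul] at this
      have : v i = 0 := by linarith
      exact hi this

def orbit (v : E4) : Finset E4 := (supp v).powerset.image (fun T => flip T v)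

lemma self_mem_orbit (v : E4) : v ∈ orbit v := by
  refine Finset.mem_image.mpr ⟨∅, by simp, ?_⟩
  ext i; simp [flip_apply]

lemma card_orbit (v : E4) : (orbit v).card = 2 ^ (supp v).card := by
  rw [orbit, Finset.card_image_of_injOn, Finset.card_powerset]
  intro T hT T' hT' h
  exact flip_injOn (Finset.mem_powerset.mp hT) (Finset.mem_powerset.mp hT') h

lemma supp_of_mem_orbit {v w : E4} (h : w ∈ orbit v) : supp w = supp v := by
  obtain ⟨T, -, rfl⟩ := Finset.mem_image.mp h
  exact supp_flip T v

lemma eq_v4 (x : E4) (a b c d : ℝ) (h0 : x 0 = a) (h1 : x 1 = b) (h2 : x 2 = c)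
    (h3 : x 3 = d) : x = v4 a b c d := by
  ext i
  fin_cases i <;> simp [v4, h0, h1, h2, h3]

lemma perm_of_distinct (p q r s : Fin 4) (h : ({p, q, r, s} : Finset (Fin 4)) = Finset.univ) :
    ∃ σ : Equiv.Perm (Fin 4), σ 0 = p ∧ σ 1 = q ∧ σ 2 = r ∧ σ 3 = s := by
  have hsurj : Function.Surjective ![p, q, r, s] := by
    intro x
    have hx : x ∈ ({p, q, r, s} : Finset (Fin 4)) := h ▸ Finset.mem_univ x
    simp only [Finset.mem_insert, Finset.mem_singleton] at hx
    rcases hx with rfl | rfl | rfl | rfl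
    · exact ⟨0, rfl⟩
    · exact ⟨1, rfl⟩
    · exact ⟨2, rfl⟩
    · exact ⟨3, rfl⟩
  have hbij : Function.Bijective ![p, q, r, s] :=
    Finite.surjective_iff_bijective.mp hsurj
  exact ⟨Equiv.ofBijective _ hbij, rfl, rfl, rfl, rfl⟩


lemma flip_mem {u : E4} {T : Finset (Fin 4)} {j : Fin 4} (h : j ∈ T) : flip T u j = -u j := by
  simp [flip_apply, h]

lemma flip_nmem {u : E4} {T : Finset (Fin 4)} {j : Fin 4} (h : j ∉ T) : flip T u j = u j := by
  simp [flip_apply, h]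

lemma flip_zero {u : E4} (T : Finset (Fin 4)) {j : Fin 4} (h : u j = 0) : flip T u j = 0 := by
  simp [flip_apply, h]

lemma nsupp {u : E4} {j : Fin 4} (h : j ∉ supp u) : u j = 0 := by
  by_contra h'; exact h (mem_supp.mpr h')

lemma subset_pair {α : Type*} [DecidableEq α] {T : Finset α} {p q : α} (h : T ⊆ {p, q}) :
    T = ∅ ∨ T = {p} ∨ T = {q} ∨ T = {p, q} := by
  by_cases hp : p ∈ T <;> by_cases hq : q ∈ T
  · refine Or.inr <| Or.inr <| Or.inr <| Finset.Subset.antisymm h ?_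
    exact Finset.insert_subset hp (Finset.singleton_subset_iff.mpr hq)
  · refine Or.inr <| Or.inl <| Finset.Subset.antisymm ?_ (Finset.singleton_subset_iff.mpr hp)
    intro x hx
    rcases Finset.mem_insert.mp (h hx) with rfl | hx'
    · exact Finset.mem_singleton_self _
    · exact absurd (Finset.mem_singleton.mp hx' ▸ hx) hq
  · refine Or.inr <| Or.inr <| Or.inl <| Finset.Subset.antisymm ?_ (Finset.singleton_subset_iff.mpr hq)
    intro x hx
    rcases Finset.mem_insert.mp (h hx) with rfl | hx'
    · exact absurd hx hp
    · exact hx'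
  · refine Or.inl (Finset.eq_empty_of_forall_notMem fun x hx => ?_)
    rcases Finset.mem_insert.mp (h hx) with rfl | hx'
    · exact hp hx
    · exact hq (Finset.mem_singleton.mp hx' ▸ hx)

lemma coe_orbit_pair {u : E4} {p q : Fin 4} (h : supp u = {p, q}) :
    (orbit u : Set E4) = {flip ∅ u, flip {p} u, flip {q} u, flip {p, q} u} := by
  ext x
  constructor
  · intro hx
    obtain ⟨T, hT, rfl⟩ := Finset.mem_image.mp hx
    have hT' : T ⊆ {p, q} := h ▸ Finset.mem_powerset.mp hT
    rcases subset_pair hT' with rfl | rfl | rfl | rfl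
    · exact Or.inl rfl
    · exact Or.inr (Or.inl rfl)
    · exact Or.inr (Or.inr (Or.inl rfl))
    · exact Or.inr (Or.inr (Or.inr rfl))
  · intro hx
    rcases hx with rfl | rfl | rfl | rfl
    · exact Finset.mem_image.mpr ⟨∅, Finset.mem_powerset.mpr (Finset.empty_subset _), rfl⟩
    · refine Finset.mem_image.mpr ⟨{p}, Finset.mem_powerset.mpr ?_, rfl⟩
      rw [h]; exact Finset.singleton_subset_iff.mpr (Finset.mem_insert_self _ _)
    · refine Finset.mem_image.mpr ⟨{q}, Finset.mem_powerset.mpr ?_, rfl⟩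
      rw [h]
      exact Finset.singleton_subset_iff.mpr (Finset.mem_insert_of_mem (Finset.mem_singleton_self _))
    · refine Finset.mem_image.mpr ⟨{p, q}, Finset.mem_powerset.mpr ?_, rfl⟩
      rw [h]

lemma coe_orbit_single {u : E4} {p : Fin 4} (h : supp u = {p}) :
    (orbit u : Set E4) = {flip ∅ u, flip {p} u} := by
  ext x
  constructor
  · intro hx
    obtain ⟨T, hT, rfl⟩ := Finset.mem_image.mp hx
    have hT' : T ⊆ {p} := h ▸ Finset.mem_powerset.mp hT
    rcases Finset.subset_singleton_iff.mp hT' with rfl | rfl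
    · exact Or.inl rfl
    · exact Or.inr rfl
  · intro hx
    rcases hx with rfl | rfl
    · exact Finset.mem_image.mpr ⟨∅, Finset.mem_powerset.mpr (Finset.empty_subset _), rfl⟩
    · refine Finset.mem_image.mpr ⟨{p}, Finset.mem_powerset.mpr ?_, rfl⟩
      rw [h]

lemma sigma_ne {σ : Equiv.Perm (Fin 4)} {i j : Fin 4} (h : i ≠ j) : σ i ≠ σ j :=
  fun h' => h (σ.injective h')


section Images

variable {u : E4} (σ : Equiv.Perm (Fin 4))

lemma zero_coord {p : Fin 4} (h : supp u = {p}) {k j : Fin 4} (hk : σ j = p) (hj : k ≠ j) :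
    u (σ k) = 0 := by
  refine nsupp ?_
  rw [h, Finset.mem_singleton, ← hk]
  exact sigma_ne hj

lemma image_single0 {p : Fin 4} (h : supp u = {p}) (h0 : σ 0 = p) :
    (fun x : E4 => (WithLp.toLp 2 (fun i => x (σ i)) : E4)) '' ↑(orbit u) =
      {v4 (u p) 0 0 0, v4 (-u p) 0 0 0} := by
  rw [coe_orbit_single h, Set.image_insert_eq, Set.image_singleton]
  have e0 : (WithLp.toLp 2 (fun i => flip ∅ u (σ i)) : E4) = v4 (u p) 0 0 0 :=
    eq_v4 _ _ _ _ _ (by show flip ∅ u (σ 0) = u p; rw [h0, flip_nmem (Finset.notMem_empty _)])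
      (flip_zero _ (zero_coord σ h h0 (by decide))) (flip_zero _ (zero_coord σ h h0 (by decide)))
      (flip_zero _ (zero_coord σ h h0 (by decide)))
  have e1 : (WithLp.toLp 2 (fun i => flip {p} u (σ i)) : E4) = v4 (-u p) 0 0 0 :=
    eq_v4 _ _ _ _ _ (by show flip {p} u (σ 0) = -u p; rw [h0, flip_mem (Finset.mem_singleton_self _)])
      (flip_zero _ (zero_coord σ h h0 (by decide))) (flip_zero _ (zero_coord σ h h0 (by decide)))
      (flip_zero _ (zero_coord σ h h0 (by decide)))
  rw [e0, e1]

lemma image_single1 {p : Fin 4} (h : supp u = {p}) (h0 : σ 1 = p) :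
    (fun x : E4 => (WithLp.toLp 2 (fun i => x (σ i)) : E4)) '' ↑(orbit u) =
      {v4 0 (u p) 0 0, v4 0 (-u p) 0 0} := by
  rw [coe_orbit_single h, Set.image_insert_eq, Set.image_singleton]
  have e0 : (WithLp.toLp 2 (fun i => flip ∅ u (σ i)) : E4) = v4 0 (u p) 0 0 :=
    eq_v4 _ _ _ _ _ (flip_zero _ (zero_coord σ h h0 (by decide)))
      (by show flip ∅ u (σ 1) = u p; rw [h0, flip_nmem (Finset.notMem_empty _)])
      (flip_zero _ (zero_coord σ h h0 (by decide)))
      (flip_zero _ (zero_coord σ h h0 (by decide)))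
  have e1 : (WithLp.toLp 2 (fun i => flip {p} u (σ i)) : E4) = v4 0 (-u p) 0 0 :=
    eq_v4 _ _ _ _ _ (flip_zero _ (zero_coord σ h h0 (by decide)))
      (by show flip {p} u (σ 1) = -u p; rw [h0, flip_mem (Finset.mem_singleton_self _)])
      (flip_zero _ (zero_coord σ h h0 (by decide)))
      (flip_zero _ (zero_coord σ h h0 (by decide)))
  rw [e0, e1]

lemma image_single2 {p : Fin 4} (h : supp u = {p}) (h0 : σ 2 = p) :
    (fun x : E4 => (WithLp.toLp 2 (fun i => x (σ i)) : E4)) '' ↑(orbit u) =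
      {v4 0 0 (u p) 0, v4 0 0 (-u p) 0} := by
  rw [coe_orbit_single h, Set.image_insert_eq, Set.image_singleton]
  have e0 : (WithLp.toLp 2 (fun i => flip ∅ u (σ i)) : E4) = v4 0 0 (u p) 0 :=
    eq_v4 _ _ _ _ _ (flip_zero _ (zero_coord σ h h0 (by decide)))
      (flip_zero _ (zero_coord σ h h0 (by decide)))
      (by show flip ∅ u (σ 2) = u p; rw [h0, flip_nmem (Finset.notMem_empty _)])
      (flip_zero _ (zero_coord σ h h0 (by decide)))
  have e1 : (WithLp.toLp 2 (fun i => flip {p} u (σ i)) : E4) = v4 0 0 (-u p) 0 :=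
    eq_v4 _ _ _ _ _ (flip_zero _ (zero_coord σ h h0 (by decide)))
      (flip_zero _ (zero_coord σ h h0 (by decide)))
      (by show flip {p} u (σ 2) = -u p; rw [h0, flip_mem (Finset.mem_singleton_self _)])
      (flip_zero _ (zero_coord σ h h0 (by decide)))
  rw [e0, e1]

lemma image_single3 {p : Fin 4} (h : supp u = {p}) (h0 : σ 3 = p) :
    (fun x : E4 => (WithLp.toLp 2 (fun i => x (σ i)) : E4)) '' ↑(orbit u) =
      {v4 0 0 0 (u p), v4 0 0 0 (-u p)} := by
  rw [coe_orbit_single h, Set.image_insert_eq, Set.image_singleton]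
  have e0 : (WithLp.toLp 2 (fun i => flip ∅ u (σ i)) : E4) = v4 0 0 0 (u p) :=
    eq_v4 _ _ _ _ _ (flip_zero _ (zero_coord σ h h0 (by decide)))
      (flip_zero _ (zero_coord σ h h0 (by decide)))
      (flip_zero _ (zero_coord σ h h0 (by decide)))
      (by show flip ∅ u (σ 3) = u p; rw [h0, flip_nmem (Finset.notMem_empty _)])
  have e1 : (WithLp.toLp 2 (fun i => flip {p} u (σ i)) : E4) = v4 0 0 0 (-u p) :=
    eq_v4 _ _ _ _ _ (flip_zero _ (zero_coord σ h h0 (by decide)))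
      (flip_zero _ (zero_coord σ h h0 (by decide)))
      (flip_zero _ (zero_coord σ h h0 (by decide)))
      (by show flip {p} u (σ 3) = -u p; rw [h0, flip_mem (Finset.mem_singleton_self _)])
  rw [e0, e1]

lemma zero_coord2 {p q : Fin 4} (h : supp u = {p, q}) {k j j' : Fin 4}
    (hj : σ j = p) (hj' : σ j' = q) (hk : k ≠ j) (hk' : k ≠ j') :
    u (σ k) = 0 := by
  refine nsupp ?_
  rw [h, Finset.mem_insert, Finset.mem_singleton, ← hj, ← hj']
  push_neg
  exact ⟨sigma_ne hk, sigma_ne hk'⟩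

lemma image_pair01 {p q : Fin 4} (hpq : p ≠ q) (h : supp u = {p, q})
    (h0 : σ 0 = p) (h1 : σ 1 = q) :
    (fun x : E4 => (WithLp.toLp 2 (fun i => x (σ i)) : E4)) '' ↑(orbit u) =
      {v4 (u p) (u q) 0 0, v4 (-u p) (u q) 0 0, v4 (u p) (-u q) 0 0,
        v4 (-u p) (-u q) 0 0} := by
  have hpmem : p ∈ ({p, q} : Finset (Fin 4)) := Finset.mem_insert_self _ _
  have hqmem : q ∈ ({p, q} : Finset (Fin 4)) := Finset.mem_insert_of_mem (Finset.mem_singleton_self _)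
  have hpq' : q ∉ ({p} : Finset (Fin 4)) := by simp [hpq.symm]
  have hqp' : p ∉ ({q} : Finset (Fin 4)) := by simp [hpq]
  have z2 : ∀ T : Finset (Fin 4), flip T u (σ 2) = 0 :=
    fun T => flip_zero _ (zero_coord2 σ h h0 h1 (by decide) (by decide))
  have z3 : ∀ T : Finset (Fin 4), flip T u (σ 3) = 0 :=
    fun T => flip_zero _ (zero_coord2 σ h h0 h1 (by decide) (by decide))
  rw [coe_orbit_pair h, Set.image_insert_eq, Set.image_insert_eq, Set.image_insert_eq,
    Set.image_singleton]
  have e0 : (WithLp.toLp 2 (fun i => flip ∅ u (σ i)) : E4) = v4 (u p) (u q) 0 0 :=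
    eq_v4 _ _ _ _ _ (by show flip ∅ u (σ 0) = u p; rw [h0, flip_nmem (Finset.notMem_empty _)])
      (by show flip ∅ u (σ 1) = u q; rw [h1, flip_nmem (Finset.notMem_empty _)])
      (z2 _) (z3 _)
  have e1 : (WithLp.toLp 2 (fun i => flip {p} u (σ i)) : E4) = v4 (-u p) (u q) 0 0 :=
    eq_v4 _ _ _ _ _ (by show flip {p} u (σ 0) = -u p; rw [h0, flip_mem (Finset.mem_singleton_self _)])
      (by show flip {p} u (σ 1) = u q; rw [h1, flip_nmem hpq'])
      (z2 _) (z3 _)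
  have e2 : (WithLp.toLp 2 (fun i => flip {q} u (σ i)) : E4) = v4 (u p) (-u q) 0 0 :=
    eq_v4 _ _ _ _ _ (by show flip {q} u (σ 0) = u p; rw [h0, flip_nmem hqp'])
      (by show flip {q} u (σ 1) = -u q; rw [h1, flip_mem (Finset.mem_singleton_self _)])
      (z2 _) (z3 _)
  have e3 : (WithLp.toLp 2 (fun i => flip {p, q} u (σ i)) : E4) = v4 (-u p) (-u q) 0 0 :=
    eq_v4 _ _ _ _ _ (by show flip {p, q} u (σ 0) = -u p; rw [h0, flip_mem hpmem])
      (by show flip {p, q} u (σ 1) = -u q; rw [h1, flip_mem hqmem])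
      (z2 _) (z3 _)
  rw [e0, e1, e2, e3]

lemma image_pair23 {p q : Fin 4} (hpq : p ≠ q) (h : supp u = {p, q})
    (h0 : σ 2 = p) (h1 : σ 3 = q) :
    (fun x : E4 => (WithLp.toLp 2 (fun i => x (σ i)) : E4)) '' ↑(orbit u) =
      {v4 0 0 (u p) (u q), v4 0 0 (-u p) (u q), v4 0 0 (u p) (-u q),
        v4 0 0 (-u p) (-u q)} := by
  have hpmem : p ∈ ({p, q} : Finset (Fin 4)) := Finset.mem_insert_self _ _
  have hqmem : q ∈ ({p, q} : Finset (Fin 4)) := Finset.mem_insert_of_mem (Finset.mem_singleton_self _)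
  have hpq' : q ∉ ({p} : Finset (Fin 4)) := by simp [hpq.symm]
  have hqp' : p ∉ ({q} : Finset (Fin 4)) := by simp [hpq]
  have z0 : ∀ T : Finset (Fin 4), flip T u (σ 0) = 0 :=
    fun T => flip_zero _ (zero_coord2 σ h h0 h1 (by decide) (by decide))
  have z1 : ∀ T : Finset (Fin 4), flip T u (σ 1) = 0 :=
    fun T => flip_zero _ (zero_coord2 σ h h0 h1 (by decide) (by decide))
  rw [coe_orbit_pair h, Set.image_insert_eq, Set.image_insert_eq, Set.image_insert_eq,
    Set.image_singleton]
  have e0 : (WithLp.toLp 2 (fun i => flip ∅ u (σ i)) : E4) = v4 0 0 (u p) (u q) :=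
    eq_v4 _ _ _ _ _ (z0 _) (z1 _)
      (by show flip ∅ u (σ 2) = u p; rw [h0, flip_nmem (Finset.notMem_empty _)])
      (by show flip ∅ u (σ 3) = u q; rw [h1, flip_nmem (Finset.notMem_empty _)])
  have e1 : (WithLp.toLp 2 (fun i => flip {p} u (σ i)) : E4) = v4 0 0 (-u p) (u q) :=
    eq_v4 _ _ _ _ _ (z0 _) (z1 _)
      (by show flip {p} u (σ 2) = -u p; rw [h0, flip_mem (Finset.mem_singleton_self _)])
      (by show flip {p} u (σ 3) = u q; rw [h1, flip_nmem hpq'])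
  have e2 : (WithLp.toLp 2 (fun i => flip {q} u (σ i)) : E4) = v4 0 0 (u p) (-u q) :=
    eq_v4 _ _ _ _ _ (z0 _) (z1 _)
      (by show flip {q} u (σ 2) = u p; rw [h0, flip_nmem hqp'])
      (by show flip {q} u (σ 3) = -u q; rw [h1, flip_mem (Finset.mem_singleton_self _)])
  have e3 : (WithLp.toLp 2 (fun i => flip {p, q} u (σ i)) : E4) = v4 0 0 (-u p) (-u q) :=
    eq_v4 _ _ _ _ _ (z0 _) (z1 _)
      (by show flip {p, q} u (σ 2) = -u p; rw [h0, flip_mem hpmem])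
      (by show flip {p, q} u (σ 3) = -u q; rw [h1, flip_mem hqmem])
  rw [e0, e1, e2, e3]

end Images


set_option maxHeartbeats 2000000 in
lemma main_comb (Vf : Finset E4)
    (hcard : Vf.card = 8)
    (hne : ∀ v ∈ Vf, v ≠ 0)
    (hflip : ∀ (T : Finset (Fin 4)), ∀ v ∈ Vf, flip T v ∈ Vf)
    (hcov : ∀ i : Fin 4, ∃ v ∈ Vf, v i ≠ 0) :
    ∃ (σ : Equiv.Perm (Fin 4)) (a b c d : ℝ), a ≠ 0 ∧ b ≠ 0 ∧ c ≠ 0 ∧ d ≠ 0 ∧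
      ((fun x : E4 => (WithLp.toLp 2 (fun i => x (σ i)) : E4)) '' ↑Vf = setI a b c d ∨
       (fun x : E4 => (WithLp.toLp 2 (fun i => x (σ i)) : E4)) '' ↑Vf = setII a b c d ∨
       (fun x : E4 => (WithLp.toLp 2 (fun i => x (σ i)) : E4)) '' ↑Vf = setIII a b c d) := by
  classical
  have horb : ∀ v ∈ Vf, orbit v ⊆ Vf := by
    intro v hv w hw
    obtain ⟨T, -, rfl⟩ := Finset.mem_image.mp hw
    exact hflip T v hv
  have hsupp1 : ∀ v ∈ Vf, 1 ≤ (supp v).card := by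
    intro v hv
    rcases Finset.eq_empty_or_nonempty (supp v) with he | hne'
    · exfalso
      apply hne v hv
      ext i
      have hi : i ∉ supp v := by rw [he]; exact Finset.notMem_empty i
      exact nsupp hi
    · exact Finset.card_pos.mpr hne'
  have hsupp2 : ∀ v ∈ Vf, (supp v).card ≤ 2 := by
    intro v hv
    by_contra hgt
    push_neg at hgt
    obtain ⟨T3, hT3sub, hT3⟩ := Finset.exists_subset_card_eq (show 3 ≤ (supp v).card from hgt)
    have hO3card : (T3.powerset.image (fun T => flip T v)).card = 8 := by
      rw [Finset.card_image_of_injOn, Finset.card_powerset, hT3]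
      · norm_num
      · intro T hT T' hT' hft
        exact flip_injOn ((Finset.mem_powerset.mp hT).trans hT3sub)
          ((Finset.mem_powerset.mp hT').trans hT3sub) hft
    have hO3sub : T3.powerset.image (fun T => flip T v) ⊆ Vf := by
      intro w hw
      obtain ⟨T, -, rfl⟩ := Finset.mem_image.mp hw
      exact hflip T v hv
    have hVO : Vf = T3.powerset.image (fun T => flip T v) :=
      (Finset.eq_of_subset_of_card_le hO3sub (by rw [hO3card, hcard])).symm
    obtain ⟨j, hj⟩ : ∃ j, j ∉ T3 := by
      by_contra hall
      push_neg at hall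
      have h4 := Finset.card_le_card (fun x _ => hall x : (Finset.univ : Finset (Fin 4)) ⊆ T3)
      simp [hT3] at h4
    by_cases hvj : v j = 0
    · obtain ⟨w, hw, hwj⟩ := hcov j
      rw [hVO] at hw
      obtain ⟨T, -, rfl⟩ := Finset.mem_image.mp hw
      exact hwj (flip_zero _ hvj)
    · have hT4sub : insert j T3 ⊆ supp v := Finset.insert_subset (mem_supp.mpr hvj) hT3sub
      have hT4 : (insert j T3).card = 4 := by rw [Finset.card_insert_of_notMem hj, hT3]
      have hle : ((insert j T3).powerset.image (fun T => flip T v)).card ≤ 8 := by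
        rw [← hcard]
        refine Finset.card_le_card ?_
        intro w hw
        obtain ⟨T, -, rfl⟩ := Finset.mem_image.mp hw
        exact hflip T v hv
      rw [Finset.card_image_of_injOn, Finset.card_powerset, hT4] at hle
      · norm_num at hle
      · intro T hT T' hT' hft
        exact flip_injOn ((Finset.mem_powerset.mp hT).trans hT4sub)
          ((Finset.mem_powerset.mp hT').trans hT4sub) hft
  set SS := Vf.image supp with hSSdef
  set VS : Finset (Fin 4) → Finset E4 := fun S => Vf.filter (fun v => supp v = S) with hVSdef
  have hmemVS : ∀ v ∈ Vf, v ∈ VS (supp v) := fun v hv => Finset.mem_filter.mpr ⟨hv, rfl⟩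
  have hVSsub : ∀ S, VS S ⊆ Vf := fun S => Finset.filter_subset _ _
  have hdisj : ∀ S T, S ≠ T → Disjoint (VS S) (VS T) := by
    intro S T hST
    rw [Finset.disjoint_left]
    intro v hvS hvT
    exact hST (((Finset.mem_filter.mp hvS).2).symm.trans (Finset.mem_filter.mp hvT).2)
  have horbVS : ∀ S, ∀ v ∈ VS S, orbit v ⊆ VS S := by
    intro S v hv w hw
    have hv' := Finset.mem_filter.mp hv
    exact Finset.mem_filter.mpr ⟨horb v hv'.1 hw, (supp_of_mem_orbit hw).trans hv'.2⟩
  have hVScard : ∀ S ∈ SS, 2 ^ S.card ≤ (VS S).card := by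
    intro S hS
    obtain ⟨v, hv, rfl⟩ := Finset.mem_image.mp hS
    calc 2 ^ (supp v).card = (orbit v).card := (card_orbit v).symm
    _ ≤ _ := Finset.card_le_card (horbVS _ v (hmemVS v hv))
  have hVScard2 : ∀ S ∈ SS, 2 ≤ (VS S).card := by
    intro S hS
    refine le_trans ?_ (hVScard S hS)
    obtain ⟨v, hv, rfl⟩ := Finset.mem_image.mp hS
    have := hsupp1 v hv
    calc 2 = 2 ^ 1 := by norm_num
    _ ≤ _ := Nat.pow_le_pow_right (by norm_num) this
  have hSScard : ∀ S ∈ SS, S.card = 1 ∨ S.card = 2 := by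
    intro S hS
    obtain ⟨v, hv, rfl⟩ := Finset.mem_image.mp hS
    have h1 := hsupp1 v hv
    have h2 := hsupp2 v hv
    omega
  have hcovS : ∀ i : Fin 4, ∃ S ∈ SS, i ∈ S := by
    intro i
    obtain ⟨v, hv, hvi⟩ := hcov i
    exact ⟨supp v, Finset.mem_image_of_mem _ hv, mem_supp.mpr hvi⟩
  have hsum2 : ∀ S T, S ≠ T → (VS S).card + (VS T).card ≤ 8 := by
    intro S T hST
    rw [← hcard, ← Finset.card_union_of_disjoint (hdisj S T hST)]
    exact Finset.card_le_card (Finset.union_subset (hVSsub S) (hVSsub T))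
  have hsum3 : ∀ S T U, S ≠ T → S ≠ U → T ≠ U →
      (VS S).card + (VS T).card + (VS U).card ≤ 8 := by
    intro S T U hST hSU hTU
    have hd : Disjoint (VS S ∪ VS T) (VS U) :=
      Finset.disjoint_union_left.mpr ⟨hdisj S U hSU, hdisj T U hTU⟩
    rw [← hcard, ← Finset.card_union_of_disjoint (hdisj S T hST),
      ← Finset.card_union_of_disjoint hd]
    exact Finset.card_le_card (Finset.union_subset
      (Finset.union_subset (hVSsub S) (hVSsub T)) (hVSsub U))
  have hsum4 : ∀ S T U W, S ≠ T → S ≠ U → S ≠ W → T ≠ U → T ≠ W → U ≠ W →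
      (VS S).card + (VS T).card + (VS U).card + (VS W).card ≤ 8 := by
    intro S T U W hST hSU hSW hTU hTW hUW
    have hd1 : Disjoint (VS S ∪ VS T) (VS U) :=
      Finset.disjoint_union_left.mpr ⟨hdisj S U hSU, hdisj T U hTU⟩
    have hd2 : Disjoint (VS S ∪ VS T ∪ VS U) (VS W) :=
      Finset.disjoint_union_left.mpr
        ⟨Finset.disjoint_union_left.mpr ⟨hdisj S W hSW, hdisj T W hTW⟩, hdisj U W hUW⟩
    rw [← hcard, ← Finset.card_union_of_disjoint (hdisj S T hST),
      ← Finset.card_union_of_disjoint hd1, ← Finset.card_union_of_disjoint hd2]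
    exact Finset.card_le_card (Finset.union_subset (Finset.union_subset
      (Finset.union_subset (hVSsub S) (hVSsub T)) (hVSsub U)) (hVSsub W))
  have hexactVS : ∀ S ∈ SS, (VS S).card ≤ 2 ^ S.card →
      ∃ v ∈ Vf, supp v = S ∧ VS S = orbit v := by
    intro S hS hle
    obtain ⟨v, hv, rfl⟩ := Finset.mem_image.mp hS
    refine ⟨v, hv, rfl, ?_⟩
    refine (Finset.eq_of_subset_of_card_le (horbVS _ v (hmemVS v hv)) ?_).symm
    rwa [card_orbit]
  by_cases hP2 : ∃ S ∈ SS, ∃ T ∈ SS, S ≠ T ∧ S.card = 2 ∧ T.card = 2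
  · -- Case I
    obtain ⟨S, hS, T, hT, hST, hS2, hT2⟩ := hP2
    have hclass : ∀ U ∈ SS, U = S ∨ U = T := by
      intro U hU
      by_contra hcon
      push_neg at hcon
      obtain ⟨hUS, hUT⟩ := hcon
      have h3 := hsum3 S T U hST (Ne.symm hUS) (Ne.symm hUT)
      have hbS := hVScard S hS
      have hbT := hVScard T hT
      rw [hS2] at hbS
      rw [hT2] at hbT
      have hbU := hVScard2 U hU
      norm_num at hbS hbT
      omega
    have hunion : S ∪ T = Finset.univ := by
      apply Finset.eq_univ_of_forall
      intro i
      obtain ⟨U, hU, hiU⟩ := hcovS i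
      rcases hclass U hU with rfl | rfl
      · exact Finset.mem_union_left _ hiU
      · exact Finset.mem_union_right _ hiU
    have hinter : S ∩ T = ∅ := by
      have hci := Finset.card_union_add_card_inter S T
      rw [hunion, hS2, hT2] at hci
      simp only [Finset.card_univ, Fintype.card_fin] at hci
      exact Finset.card_eq_zero.mp (by omega)
    have hdST : Disjoint S T := Finset.disjoint_iff_inter_eq_empty.mpr hinter
    obtain ⟨p, q, hpq, rfl⟩ := Finset.card_eq_two.mp hS2
    obtain ⟨r, s, hrs, rfl⟩ := Finset.card_eq_two.mp hT2
    have hpT : p ∉ ({r, s} : Finset (Fin 4)) :=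
      Finset.disjoint_left.mp hdST (Finset.mem_insert_self _ _)
    have hqT : q ∉ ({r, s} : Finset (Fin 4)) :=
      Finset.disjoint_left.mp hdST (Finset.mem_insert_of_mem (Finset.mem_singleton_self _))
    have huniv : ({p, q, r, s} : Finset (Fin 4)) = Finset.univ := by
      rw [← hunion]
      ext x
      simp only [Finset.mem_insert, Finset.mem_singleton, Finset.mem_union]
      tauto
    obtain ⟨σ, hσ0, hσ1, hσ2, hσ3⟩ := perm_of_distinct p q r s huniv
    have hVfeq : Vf = VS {p, q} ∪ VS {r, s} := by
      apply Finset.Subset.antisymm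
      · intro v hv
        have hSv : supp v ∈ SS := Finset.mem_image_of_mem _ hv
        rcases hclass _ hSv with h | h
        · exact Finset.mem_union_left _ (h ▸ hmemVS v hv)
        · exact Finset.mem_union_right _ (h ▸ hmemVS v hv)
      · intro v hv
        rcases Finset.mem_union.mp hv with h | h <;> exact hVSsub _ h
    have h8 : (VS {p, q}).card + (VS {r, s}).card = 8 := by
      rw [← hcard, hVfeq, Finset.card_union_of_disjoint (hdisj _ _ hST)]
    have hbS := hVScard _ hS
    have hbT := hVScard _ hT
    rw [hS2] at hbS
    rw [hT2] at hbT
    norm_num at hbS hbT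
    obtain ⟨u, hu, hsu, hou⟩ := hexactVS _ hS (by rw [hS2]; omega)
    obtain ⟨w, hw, hsw, how⟩ := hexactVS _ hT (by rw [hT2]; omega)
    have hup : u p ≠ 0 := mem_supp.mp (hsu ▸ Finset.mem_insert_self _ _)
    have huq : u q ≠ 0 := mem_supp.mp
      (hsu ▸ Finset.mem_insert_of_mem (Finset.mem_singleton_self _))
    have hwr : w r ≠ 0 := mem_supp.mp (hsw ▸ Finset.mem_insert_self _ _)
    have hws : w s ≠ 0 := mem_supp.mp
      (hsw ▸ Finset.mem_insert_of_mem (Finset.mem_singleton_self _))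
    refine ⟨σ, u p, u q, w r, w s, hup, huq, hwr, hws, Or.inl ?_⟩
    have hcoe : (↑Vf : Set E4) = ↑(orbit u) ∪ ↑(orbit w) := by
      rw [hVfeq, hou, how]
      push_cast
      rfl
    rw [hcoe, Set.image_union, image_pair01 σ hpq hsu hσ0 hσ1,
      image_pair23 σ hrs hsw hσ2 hσ3]
    ext x
    simp only [setI, Set.mem_union, Set.mem_insert_iff, Set.mem_singleton_iff]
    tauto
  · by_cases hP1 : ∃ S ∈ SS, S.card = 2
    · -- Case II
      obtain ⟨S, hS, hS2⟩ := hP1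
      push_neg at hP2
      have huniqpair : ∀ U ∈ SS, U.card = 2 → U = S := by
        intro U hU hU2
        by_contra hne'
        exact hP2 S hS U hU (fun h => hne' h.symm) hS2 hU2
      have hcompl : (Finset.univ \ S).card = 2 := by
        rw [Finset.card_sdiff_of_subset (Finset.subset_univ S), Finset.card_univ, Fintype.card_fin, hS2]
      obtain ⟨r, s, hrs, hrs_eq⟩ := Finset.card_eq_two.mp hcompl
      have hrS : r ∉ S := by
        have hmem : r ∈ Finset.univ \ S := by rw [hrs_eq]; exact Finset.mem_insert_self _ _
        exact (Finset.mem_sdiff.mp hmem).2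
      have hsS : s ∉ S := by
        have hmem : s ∈ Finset.univ \ S := by
          rw [hrs_eq]; exact Finset.mem_insert_of_mem (Finset.mem_singleton_self _)
        exact (Finset.mem_sdiff.mp hmem).2
      have hsingmem : ∀ k : Fin 4, k ∉ S → ({k} : Finset (Fin 4)) ∈ SS := by
        intro k hk
        obtain ⟨U, hU, hkU⟩ := hcovS k
        rcases hSScard U hU with h1 | h2
        · obtain ⟨a, rfl⟩ := Finset.card_eq_one.mp h1
          obtain rfl := Finset.mem_singleton.mp hkU
          exact hU
        · exact absurd (huniqpair U hU h2 ▸ hkU) hk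
      have hrSS := hsingmem r hrS
      have hsSS := hsingmem s hsS
      have hSr : S ≠ {r} := by intro h; rw [h] at hS2; simp at hS2
      have hSs : S ≠ {s} := by intro h; rw [h] at hS2; simp at hS2
      have hrs' : ({r} : Finset (Fin 4)) ≠ {s} :=
        fun h => hrs (Finset.singleton_injective h)
      have hclass : ∀ U ∈ SS, U = S ∨ U = {r} ∨ U = {s} := by
        intro U hU
        rcases hSScard U hU with h1 | h2
        · obtain ⟨k, rfl⟩ := Finset.card_eq_one.mp h1
          by_cases hkr : k = r
          · subst hkr; exact Or.inr (Or.inl rfl)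
          by_cases hks : k = s
          · subst hks; exact Or.inr (Or.inr rfl)
          exfalso
          have hkS : S ≠ ({k} : Finset (Fin 4)) := by
            intro h; rw [h] at hS2; simp at hS2
          have hkr' : ({r} : Finset (Fin 4)) ≠ {k} :=
            fun h => hkr (Finset.singleton_injective h).symm
          have hks' : ({s} : Finset (Fin 4)) ≠ {k} :=
            fun h => hks (Finset.singleton_injective h).symm
          have h4 := hsum4 S {r} {s} {k} hSr hSs hkS hrs' hkr' hks'
          have hbS := hVScard S hS
          rw [hS2] at hbS
          norm_num at hbS
          have hbr := hVScard2 _ hrSS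
          have hbs := hVScard2 _ hsSS
          have hbk := hVScard2 _ hU
          omega
        · exact Or.inl (huniqpair U hU h2)
      have hVfeq : Vf = VS S ∪ VS {r} ∪ VS {s} := by
        apply Finset.Subset.antisymm
        · intro v hv
          have hSv : supp v ∈ SS := Finset.mem_image_of_mem _ hv
          simp only [Finset.mem_union]
          rcases hclass _ hSv with h | h | h
          · exact Or.inl (Or.inl (h ▸ hmemVS v hv))
          · exact Or.inl (Or.inr (h ▸ hmemVS v hv))
          · exact Or.inr (h ▸ hmemVS v hv)
        · intro v hv
          simp only [Finset.mem_union] at hv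
          rcases hv with (h | h) | h <;> exact hVSsub _ h
      have hD2 : Disjoint (VS S ∪ VS {r}) (VS {s}) :=
        Finset.disjoint_union_left.mpr ⟨hdisj _ _ hSs, hdisj _ _ hrs'⟩
      have h8 : (VS S).card + (VS {r}).card + (VS {s}).card = 8 := by
        rw [← hcard, hVfeq, Finset.card_union_of_disjoint hD2,
          Finset.card_union_of_disjoint (hdisj _ _ hSr)]
      have hbS := hVScard _ hS
      rw [hS2] at hbS
      norm_num at hbS
      have hbr := hVScard2 _ hrSS
      have hbs := hVScard2 _ hsSS
      obtain ⟨u, hu, hsu, hou⟩ := hexactVS _ hS (by rw [hS2]; omega)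
      obtain ⟨wr, hwr', hswr, howr⟩ := hexactVS _ hrSS
        (by simp only [Finset.card_singleton, pow_one]; omega)
      obtain ⟨ws, hws', hsws, hows⟩ := hexactVS _ hsSS
        (by simp only [Finset.card_singleton, pow_one]; omega)
      obtain ⟨p, q, hpq, rfl⟩ := Finset.card_eq_two.mp hS2
      have huniv : ({p, q, r, s} : Finset (Fin 4)) = Finset.univ := by
        have hu' : ({p, q} : Finset (Fin 4)) ∪ {r, s} = Finset.univ := by
          rw [← hrs_eq]
          exact Finset.union_sdiff_of_subset (Finset.subset_univ _)
        rw [← hu']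
        ext x
        simp only [Finset.mem_insert, Finset.mem_singleton, Finset.mem_union]
        tauto
      obtain ⟨σ, hσ0, hσ1, hσ2, hσ3⟩ := perm_of_distinct p q r s huniv
      have hup : u p ≠ 0 := mem_supp.mp (hsu ▸ Finset.mem_insert_self _ _)
      have huq : u q ≠ 0 := mem_supp.mp
        (hsu ▸ Finset.mem_insert_of_mem (Finset.mem_singleton_self _))
      have hwrr : wr r ≠ 0 := mem_supp.mp (hswr ▸ Finset.mem_singleton_self _)
      have hwss : ws s ≠ 0 := mem_supp.mp (hsws ▸ Finset.mem_singleton_self _)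
      refine ⟨σ, u p, u q, wr r, ws s, hup, huq, hwrr, hwss, Or.inr (Or.inl ?_)⟩
      have hcoe : (↑Vf : Set E4) = ↑(orbit u) ∪ ↑(orbit wr) ∪ ↑(orbit ws) := by
        rw [hVfeq, hou, howr, hows]
        push_cast
        rfl
      rw [hcoe, Set.image_union, Set.image_union, image_pair01 σ hpq hsu hσ0 hσ1,
        image_single2 σ hswr hσ2, image_single3 σ hsws hσ3]
      ext x
      simp only [setII, Set.mem_union, Set.mem_insert_iff, Set.mem_singleton_iff]
      tauto
    · -- Case III
      push_neg at hP1
      have hsing : ∀ i : Fin 4, ({i} : Finset (Fin 4)) ∈ SS := by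
        intro i
        obtain ⟨S, hS, hiS⟩ := hcovS i
        rcases hSScard S hS with h1 | h2
        · obtain ⟨a, rfl⟩ := Finset.card_eq_one.mp h1
          obtain rfl := Finset.mem_singleton.mp hiS
          exact hS
        · exact absurd h2 (hP1 S hS)
      have hVfeq : Vf = VS {0} ∪ VS {1} ∪ VS {2} ∪ VS {3} := by
        apply Finset.Subset.antisymm
        · intro v hv
          have hS : supp v ∈ SS := Finset.mem_image_of_mem _ hv
          rcases hSScard _ hS with h1 | h2
          · obtain ⟨i, hi⟩ := Finset.card_eq_one.mp h1
            have hv' : v ∈ VS {i} := hi ▸ hmemVS v hv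
            simp only [Finset.mem_union]
            fin_cases i
            · exact Or.inl (Or.inl (Or.inl hv'))
            · exact Or.inl (Or.inl (Or.inr hv'))
            · exact Or.inl (Or.inr hv')
            · exact Or.inr hv'
          · exact absurd h2 (hP1 _ hS)
        · intro v hv
          simp only [Finset.mem_union] at hv
          rcases hv with ((h | h) | h) | h <;> exact hVSsub _ h
      have d01 := hdisj {0} {1} (by decide)
      have d02 := hdisj {0} {2} (by decide)
      have d03 := hdisj {0} {3} (by decide)
      have d12 := hdisj {1} {2} (by decide)
      have d13 := hdisj {1} {3} (by decide)
      have d23 := hdisj {2} {3} (by decide)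
      have hD2 : Disjoint (VS {0} ∪ VS {1}) (VS {2}) :=
        Finset.disjoint_union_left.mpr ⟨d02, d12⟩
      have hD3 : Disjoint (VS {0} ∪ VS {1} ∪ VS {2}) (VS {3}) :=
        Finset.disjoint_union_left.mpr ⟨Finset.disjoint_union_left.mpr ⟨d03, d13⟩, d23⟩
      have h8 : (VS {0}).card + (VS {1}).card + (VS {2}).card + (VS {3}).card = 8 := by
        rw [← hcard, hVfeq, Finset.card_union_of_disjoint hD3,
          Finset.card_union_of_disjoint hD2, Finset.card_union_of_disjoint d01]
      have hb0 := hVScard2 _ (hsing 0)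
      have hb1 := hVScard2 _ (hsing 1)
      have hb2 := hVScard2 _ (hsing 2)
      have hb3 := hVScard2 _ (hsing 3)
      have hc0 : (VS {0}).card ≤ 2 ^ (({0} : Finset (Fin 4)).card) := by
        simp only [Finset.card_singleton, pow_one]; omega
      have hc1 : (VS {1}).card ≤ 2 ^ (({1} : Finset (Fin 4)).card) := by
        simp only [Finset.card_singleton, pow_one]; omega
      have hc2 : (VS {2}).card ≤ 2 ^ (({2} : Finset (Fin 4)).card) := by
        simp only [Finset.card_singleton, pow_one]; omega
      have hc3 : (VS {3}).card ≤ 2 ^ (({3} : Finset (Fin 4)).card) := by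
        simp only [Finset.card_singleton, pow_one]; omega
      obtain ⟨v0, hv0, hs0, ho0⟩ := hexactVS _ (hsing 0) hc0
      obtain ⟨v1, hv1, hs1, ho1⟩ := hexactVS _ (hsing 1) hc1
      obtain ⟨v2, hv2, hs2, ho2⟩ := hexactVS _ (hsing 2) hc2
      obtain ⟨v3, hv3, hs3, ho3⟩ := hexactVS _ (hsing 3) hc3
      refine ⟨1, v0 0, v1 1, v2 2, v3 3, ?_, ?_, ?_, ?_, Or.inr (Or.inr ?_)⟩
      · exact mem_supp.mp (hs0 ▸ Finset.mem_singleton_self (0 : Fin 4))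
      · exact mem_supp.mp (hs1 ▸ Finset.mem_singleton_self (1 : Fin 4))
      · exact mem_supp.mp (hs2 ▸ Finset.mem_singleton_self (2 : Fin 4))
      · exact mem_supp.mp (hs3 ▸ Finset.mem_singleton_self (3 : Fin 4))
      · have hcoe : (↑Vf : Set E4) =
            ↑(orbit v0) ∪ ↑(orbit v1) ∪ ↑(orbit v2) ∪ ↑(orbit v3) := by
          rw [hVfeq, ho0, ho1, ho2, ho3]
          push_cast
          rfl
        rw [hcoe, Set.image_union, Set.image_union, Set.image_union,
          image_single0 1 hs0 rfl, image_single1 1 hs1 rfl,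
          image_single2 1 hs2 rfl, image_single3 1 hs3 rfl]
        ext x
        simp only [setIII, Set.mem_union, Set.mem_insert_iff, Set.mem_singleton_iff]
        tauto
end Stmt6Aux

theorem stmt6 (X : Geometry.SimplicialComplex ℝ (EuclideanSpace ℝ (Fin 4)))
    (hX : IsEquivSphereTriangulation 4 X)
    (hcard : X.vertices.ncard = 8) :
    ∃ (σ : Equiv.Perm (Fin 4)) (a b c d : ℝ), a ≠ 0 ∧ b ≠ 0 ∧ c ≠ 0 ∧ d ≠ 0 ∧
      ((fun x : EuclideanSpace ℝ (Fin 4) =>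
          (WithLp.toLp 2 (fun i => x (σ i)) : EuclideanSpace ℝ (Fin 4))) '' X.vertices = setI a b c d ∨
       (fun x : EuclideanSpace ℝ (Fin 4) =>
          (WithLp.toLp 2 (fun i => x (σ i)) : EuclideanSpace ℝ (Fin 4))) '' X.vertices = setII a b c d ∨
       (fun x : EuclideanSpace ℝ (Fin 4) =>
          (WithLp.toLp 2 (fun i => x (σ i)) : EuclideanSpace ℝ (Fin 4))) '' X.vertices = setIII a b c d) := by
  classical
  obtain ⟨hfin, h0, hhomeo, hequiv⟩ := hX
  have hVfin : X.vertices.Finite := Set.finite_of_ncard_ne_zero (by rw [hcard]; norm_num)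
  set Vf := hVfin.toFinset with hVf
  have hVcoe : (↑Vf : Set (EuclideanSpace ℝ (Fin 4))) = X.vertices := hVfin.coe_toFinset
  have hVcard : Vf.card = 8 := by rw [← Set.ncard_eq_toFinset_card _ hVfin, hcard]
  have hvert : ∀ v, v ∈ Vf ↔ {v} ∈ X.faces := by
    intro v
    rw [hVf, Set.Finite.mem_toFinset]
    exact Iff.rfl
  have hne : ∀ v ∈ Vf, v ≠ 0 := by
    intro v hv h0v
    apply h0
    have hvmem : v ∈ X.vertices := (hvert v).mp hv
    exact h0v ▸ Geometry.SimplicialComplex.vertices_subset_space hvmem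
  have hflip : ∀ T : Finset (Fin 4), ∀ v ∈ Vf, Stmt6Aux.flip T v ∈ Vf := by
    intro T v hv
    obtain ⟨t, ht, hteq⟩ := hequiv (Stmt6Aux.flipSign T) (Stmt6Aux.flipSign_pm T) {v}
      ((hvert v).mp hv)
    have ht2 : (↑t : Set (EuclideanSpace ℝ (Fin 4))) = {Stmt6Aux.flip T v} := by
      rw [hteq]
      simp only [Finset.coe_singleton, Set.image_singleton]
      rfl
    have ht' : t = {Stmt6Aux.flip T v} := Finset.coe_injective (by rw [ht2]; simp)
    exact (hvert _).mpr (ht' ▸ ht)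
  have hcov : ∀ i : Fin 4, ∃ v ∈ Vf, v i ≠ 0 := by
    intro i
    by_contra hall
    push_neg at hall
    have hsp : ∀ x ∈ X.space, x i = 0 := by
      intro x hx
      obtain ⟨sface, hsface, hxs⟩ := Geometry.SimplicialComplex.mem_space_iff.mp hx
      have hconv : Convex ℝ {y : EuclideanSpace ℝ (Fin 4) | y i = 0} := by
        intro y hy z hz a b ha hb hab
        simp only [Set.mem_setOf_eq] at *
        simp [PiLp.add_apply, PiLp.smul_apply, hy, hz]
      have hsubset : (↑sface : Set (EuclideanSpace ℝ (Fin 4))) ⊆ {y | y i = 0} := by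
        intro y hy
        have hyf : {y} ∈ X.faces := X.down_closed hsface
          (Finset.singleton_subset_iff.mpr hy) (Finset.singleton_nonempty _)
        exact hall y ((hvert y).mpr hyf)
      exact convexHull_min hsubset hconv hxs
    obtain ⟨φ, hφ⟩ := hhomeo
    have hy : EuclideanSpace.single i (1:ℝ) ∈
        Metric.sphere (0 : EuclideanSpace ℝ (Fin 4)) 1 := by
      simp [EuclideanSpace.norm_single]
    have heq := hφ (φ.symm ⟨_, hy⟩)
    rw [Homeomorph.apply_symm_apply] at heq
    have hxi : ((φ.symm ⟨_, hy⟩ : X.space) : EuclideanSpace ℝ (Fin 4)) i = 0 :=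
      hsp _ (φ.symm ⟨_, hy⟩).2
    have hci := congrArg (fun w : EuclideanSpace ℝ (Fin 4) => w i) heq
    simp only [EuclideanSpace.single_apply, if_pos rfl, PiLp.smul_apply, smul_eq_mul,
      hxi, mul_zero] at hci
    exact one_ne_zero hci
  obtain ⟨σ, a, b, c, d, ha, hb, hc, hd, hcases⟩ :=
    Stmt6Aux.main_comb Vf hVcard hne hflip hcov
  rw [hVcoe] at hcases
  exact ⟨σ, a, b, c, d, ha, hb, hc, hd, hcases⟩
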